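/- (Transient lemma) Let H ∈ F_𝐇 be the fully-packed configuration consisting of all horizontal edges and no vertical edges. If (A,u,u) ∈ 𝒮 with d_u(A) = 2 and A ≠ H, then there exists a vacant horizontal edge vv' (i.e. a horizontal edge vv' ∉ A) such that (A,u,u) → (A,v,v). -/

import Mathlib

attribute [local instance] Classical.propDecidable

namespace FPL

/-- Vertices of the brick-wall honeycomb lattice with periodic boundary conditions. -/
abbrev Vtx (m n : ℕ) := ZMod m × ZMod n

/-- Adjacency on the brick-wall honeycomb lattice: horizontal edges between `(i,j)` and
`(i+1,j)`, and vertical edges between `(i,j)` and `(i,j+1)` whenever `i+j` is even. -/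
def HoneyAdj (m n : ℕ) (x y : Vtx m n) : Prop :=
  (x.2 = y.2 ∧ (y.1 = x.1 + 1 ∨ x.1 = y.1 + 1)) ∨
  (x.1 = y.1 ∧ ((y.2 = x.2 + 1 ∧ Even (x.1.val + x.2.val)) ∨
                (x.2 = y.2 + 1 ∧ Even (y.1.val + y.2.val))))

variable (m n : ℕ) [NeZero m] [NeZero n]

/-- The edge set of the brick-wall honeycomb lattice. -/
noncomputable def honeyEdges : Finset (Sym2 (Vtx m n)) :=
  Finset.image (fun p : Vtx m n × Vtx m n => s(p.1, p.2))
    (Finset.univ.filter fun p => HoneyAdj m n p.1 p.2)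

/-- `bdeg m n A x` is the degree of the vertex `x` in the spanning subgraph `(V, A)`. -/
noncomputable def bdeg (A : Finset (Sym2 (Vtx m n))) (x : Vtx m n) : ℕ :=
  (A.filter fun e => x ∈ e).card

/-- `(A,u,v)` is a state of the worm chain: `A ⊆ E`, and the set of odd-degree vertices of
`(V,A)` is `{u,v}` if `u ≠ v`, and is empty if `u = v`. -/
def IsWormState (A : Finset (Sym2 (Vtx m n))) (u v : Vtx m n) : Prop :=
  A ⊆ honeyEdges m n ∧ ∀ x, (Odd (bdeg m n A x) ↔ ((x = u ∨ x = v) ∧ u ≠ v))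

/-- The worm state space `𝒮`. -/
abbrev WormState := {p : Finset (Sym2 (Vtx m n)) × Vtx m n × Vtx m n //
  IsWormState m n p.1 p.2.1 p.2.2}

/-- The set `ℛ` of states with no isolated vertices. -/
def FullSupport (st : WormState m n) : Prop := ∀ x : Vtx m n, bdeg m n st.1.1 x ≠ 0

/-- The fully-packed worm transition matrix `P'_∞`. -/
noncomputable def Pinf : Matrix (WormState m n) (WormState m n) ℝ := fun st tt =>
  if st.1.2.1 = st.1.2.2 then
    (if tt = st then (bdeg m n st.1.1 st.1.2.2 : ℝ) / 3 else 0) +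
    (if ∃ v' : Vtx m n, HoneyAdj m n st.1.2.2 v' ∧ s(st.1.2.2, v') ∉ st.1.1 ∧
        tt.1.1 = insert s(st.1.2.2, v') st.1.1 ∧
        ((tt.1.2.1 = v' ∧ tt.1.2.2 = st.1.2.2) ∨ (tt.1.2.1 = st.1.2.2 ∧ tt.1.2.2 = v'))
      then 1/6 else 0)
  else
    (if bdeg m n st.1.1 st.1.2.1 = 3 ∧ ∃ u' : Vtx m n, HoneyAdj m n st.1.2.1 u' ∧
        s(st.1.2.1, u') ∈ st.1.1 ∧ tt.1.1 = st.1.1.erase s(st.1.2.1, u') ∧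
        tt.1.2.1 = u' ∧ tt.1.2.2 = st.1.2.2 then 1/6 else 0) +
    (if bdeg m n st.1.1 st.1.2.1 = 1 ∧ ∃ u' : Vtx m n, HoneyAdj m n st.1.2.1 u' ∧
        s(st.1.2.1, u') ∉ st.1.1 ∧ tt.1.1 = insert s(st.1.2.1, u') st.1.1 ∧
        tt.1.2.1 = u' ∧ tt.1.2.2 = st.1.2.2 then 1/4 else 0) +
    (if bdeg m n st.1.1 st.1.2.2 = 3 ∧ ∃ v' : Vtx m n, HoneyAdj m n st.1.2.2 v' ∧
        s(st.1.2.2, v') ∈ st.1.1 ∧ tt.1.1 = st.1.1.erase s(st.1.2.2, v') ∧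
        tt.1.2.1 = st.1.2.1 ∧ tt.1.2.2 = v' then 1/6 else 0) +
    (if bdeg m n st.1.1 st.1.2.2 = 1 ∧ ∃ v' : Vtx m n, HoneyAdj m n st.1.2.2 v' ∧
        s(st.1.2.2, v') ∉ st.1.1 ∧ tt.1.1 = insert s(st.1.2.2, v') st.1.1 ∧
        tt.1.2.1 = st.1.2.1 ∧ tt.1.2.2 = v' then 1/4 else 0)

/-- `st → tt`: some power of `P'_∞` has positive `(st,tt)` entry. -/
def Reaches (st tt : WormState m n) : Prop := ∃ k : ℕ, 0 < (Pinf m n ^ k) st tt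

/-- `st ↔ tt`: mutual reachability. -/
def Comm (st tt : WormState m n) : Prop := Reaches m n st tt ∧ Reaches m n tt st

/-- The fully-packed configuration consisting of all horizontal edges. -/
noncomputable def Hconfig : Finset (Sym2 (Vtx m n)) :=
  Finset.image (fun p : Vtx m n => s(p, (p.1 + 1, p.2))) Finset.univ

section
variable (m n : ℕ) [NeZero m] [NeZero n]

lemma pinf_nonneg (st tt : WormState m n) : 0 ≤ Pinf m n st tt := by
  unfold Pinf
  split_ifs <;> positivity

lemma pinf_pow_nonneg (k : ℕ) (st tt : WormState m n) : 0 ≤ (Pinf m n ^ k) st tt := by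
  induction k generalizing st tt with
  | zero => simp [Matrix.one_apply]; split_ifs <;> norm_num
  | succ k ih =>
    rw [pow_succ, Matrix.mul_apply]
    exact Finset.sum_nonneg fun i _ => mul_nonneg (ih st i) (pinf_nonneg m n i tt)

lemma reaches_refl (st : WormState m n) : Reaches m n st st :=
  ⟨0, by simp [Matrix.one_apply]⟩

lemma reaches_trans {st t1 t2 : WormState m n} (h1 : Reaches m n st t1)
    (h2 : Reaches m n t1 t2) : Reaches m n st t2 := by
  obtain ⟨k, hk⟩ := h1; obtain ⟨l, hl⟩ := h2
  refine ⟨k + l, ?_⟩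
  rw [pow_add, Matrix.mul_apply]
  have : 0 < (Pinf m n ^ k) st t1 * (Pinf m n ^ l) t1 t2 := mul_pos hk hl
  refine lt_of_lt_of_le this ?_
  apply Finset.single_le_sum (f := fun i => (Pinf m n ^ k) st i * (Pinf m n ^ l) i t2)
    (fun i _ => mul_nonneg (pinf_pow_nonneg m n k st i) (pinf_pow_nonneg m n l i t2))
    (Finset.mem_univ t1)

lemma reaches_single {st tt : WormState m n} (h : 0 < Pinf m n st tt) :
    Reaches m n st tt := ⟨1, by simpa using h⟩

end
set_option linter.unusedSectionVars false
section
variable (m n : ℕ) [NeZero m] [NeZero n]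

lemma bdeg_insert (A : Finset (Sym2 (Vtx m n))) (e : Sym2 (Vtx m n)) (he : e ∉ A)
    (x : Vtx m n) :
    bdeg m n (insert e A) x = bdeg m n A x + (if x ∈ e then 1 else 0) := by
  unfold bdeg
  rw [Finset.filter_insert]
  split_ifs with h
  · rw [Finset.card_insert_of_notMem (fun hc => he (Finset.mem_filter.1 hc).1)]
  · simp

lemma bdeg_erase (A : Finset (Sym2 (Vtx m n))) (e : Sym2 (Vtx m n)) (he : e ∈ A)
    (x : Vtx m n) :
    bdeg m n A x = bdeg m n (A.erase e) x + (if x ∈ e then 1 else 0) := by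
  conv_lhs => rw [← Finset.insert_erase he]
  rw [bdeg_insert m n _ e (Finset.notMem_erase e A)]

lemma mem_honeyEdges {a b : Vtx m n} (h : HoneyAdj m n a b) :
    s(a, b) ∈ honeyEdges m n := by
  unfold honeyEdges
  exact Finset.mem_image.2 ⟨(a, b), Finset.mem_filter.2 ⟨Finset.mem_univ _, h⟩, rfl⟩

lemma honeyAdj_symm {a b : Vtx m n} (h : HoneyAdj m n a b) : HoneyAdj m n b a := by
  unfold HoneyAdj at *
  tauto

end
section
variable (m n : ℕ) [NeZero m] [NeZero n]

/-- right neighbor -/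
noncomputable def rt (x : Vtx m n) : Vtx m n := (x.1 + 1, x.2)
/-- left neighbor -/
noncomputable def lf (x : Vtx m n) : Vtx m n := (x.1 - 1, x.2)
/-- vertical partner -/
noncomputable def vp (x : Vtx m n) : Vtx m n :=
  if Even (x.1.val + x.2.val) then (x.1, x.2 + 1) else (x.1, x.2 - 1)

/-- parity of a coordinate -/
noncomputable def q {k : ℕ} (c : ZMod k) : ZMod 2 := (c.val : ZMod 2)

lemma q_hom {k : ℕ} [NeZero k] (hk : 2 ∣ k) (c : ZMod k) :
    q c = ZMod.castHom hk (ZMod 2) c := by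
  rw [ZMod.castHom_apply, ← ZMod.natCast_val]; rfl

lemma q_add {k : ℕ} [NeZero k] (hk : 2 ∣ k) (c d : ZMod k) :
    q (c + d) = q c + q d := by rw [q_hom hk, q_hom hk, q_hom hk, map_add]

lemma q_one {k : ℕ} [NeZero k] (hk : 2 ∣ k) : q (1 : ZMod k) = 1 := by
  rw [q_hom hk, map_one]

lemma q_neg_one {k : ℕ} [NeZero k] (hk : 2 ∣ k) : q (-1 : ZMod k) = 1 := by
  rw [q_hom hk, map_neg, map_one]; decide

/-- parity of a vertex -/
noncomputable def par (x : Vtx m n) : ZMod 2 := q x.1 + q x.2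

lemma even_iff_par (x : Vtx m n) : Even (x.1.val + x.2.val) ↔ par m n x = 0 := by
  unfold par q
  rw [← Nat.cast_add, ZMod.natCast_eq_zero_iff]
  exact (even_iff_two_dvd).symm.symm

lemma par_vp (hn2 : 2 ∣ n) (x : Vtx m n) : par m n (vp m n x) = par m n x + 1 := by
  unfold vp
  split_ifs with h
  · show q x.1 + q (x.2 + 1) = _
    rw [q_add hn2, q_one hn2]; unfold par; ring
  · show q x.1 + q (x.2 - 1) = _
    rw [sub_eq_add_neg, q_add hn2, q_neg_one hn2]; unfold par; ring

lemma zmod2_cases (a : ZMod 2) : a = 0 ∨ a = 1 := by revert a; decide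

lemma vp_vp (hn2 : 2 ∣ n) (x : Vtx m n) : vp m n (vp m n x) = x := by
  have key : Even ((vp m n x).1.val + (vp m n x).2.val) ↔ ¬ Even (x.1.val + x.2.val) := by
    rw [even_iff_par, even_iff_par, par_vp m n hn2]
    rcases zmod2_cases (par m n x) with h | h <;> rw [h] <;> simp <;> decide
  by_cases h : Even (x.1.val + x.2.val)
  · have h1 : vp m n x = (x.1, x.2 + 1) := if_pos h
    have h2 : ¬ Even ((vp m n x).1.val + (vp m n x).2.val) := by rw [key]; simpa using h
    conv_lhs => rw [vp, if_neg h2]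
    rw [h1]; simp
  · have h1 : vp m n x = (x.1, x.2 - 1) := if_neg h
    have h2 : Even ((vp m n x).1.val + (vp m n x).2.val) := key.2 h
    conv_lhs => rw [vp, if_pos h2]
    rw [h1]; simp

end
set_option linter.unusedSectionVars false
section
variable (m n : ℕ) [NeZero m] [NeZero n]

lemma zmod_one_ne_zero {k : ℕ} (h : 2 ≤ k) : (1 : ZMod k) ≠ 0 := by
  haveI : NeZero k := NeZero.of_gt h
  intro hc
  have h2 : ((1 : ℕ) : ZMod k) = 0 := by exact_mod_cast hc
  have := Nat.le_of_dvd one_pos ((ZMod.natCast_eq_zero_iff 1 k).1 h2)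
  omega

lemma zmod_two_ne_zero {k : ℕ} (h : 3 ≤ k) : (2 : ZMod k) ≠ 0 := by
  haveI : NeZero k := NeZero.of_gt (by omega : 1 < k)
  intro hc
  have h2 : ((2 : ℕ) : ZMod k) = 0 := by exact_mod_cast hc
  have := Nat.le_of_dvd two_pos ((ZMod.natCast_eq_zero_iff 2 k).1 h2)
  omega

lemma honeyAdj_rt (x : Vtx m n) : HoneyAdj m n x (rt m n x) :=
  Or.inl ⟨rfl, Or.inl rfl⟩

lemma honeyAdj_lf (x : Vtx m n) : HoneyAdj m n x (lf m n x) :=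
  Or.inl ⟨rfl, Or.inr (by simp [lf])⟩

lemma par_one_of_not_even (x : Vtx m n) (h : ¬ Even (x.1.val + x.2.val)) :
    par m n x = 1 := by
  rcases zmod2_cases (par m n x) with h0 | h1
  · exact absurd ((even_iff_par m n x).2 h0) h
  · exact h1

lemma honeyAdj_vp (hn2 : 2 ∣ n) (x : Vtx m n) : HoneyAdj m n x (vp m n x) := by
  unfold vp
  split_ifs with h
  · exact Or.inr ⟨rfl, Or.inl ⟨rfl, h⟩⟩
  · refine Or.inr ⟨rfl, Or.inr ⟨by simp, ?_⟩⟩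
    show Even ((x.1, x.2 - 1).1.val + (x.1, x.2 - 1).2.val)
    rw [even_iff_par]
    show q x.1 + q (x.2 - 1) = 0
    rw [sub_eq_add_neg, q_add hn2, q_neg_one hn2]
    have := par_one_of_not_even m n x h
    unfold par at this
    rw [← add_assoc, this]
    decide

lemma rt_ne (hm : 2 ≤ m) (x : Vtx m n) : rt m n x ≠ x := by
  intro hc
  have h1 : x.1 + 1 = x.1 + 0 := by simpa [rt] using congrArg Prod.fst hc
  exact zmod_one_ne_zero hm (add_left_cancel h1)

lemma lf_ne (hm : 2 ≤ m) (x : Vtx m n) : lf m n x ≠ x := by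
  intro hc
  have h1 : x.1 - 1 = x.1 := by simpa [lf] using congrArg Prod.fst hc
  have h2 : x.1 + 1 = x.1 + 0 := by linear_combination -h1
  exact zmod_one_ne_zero hm (add_left_cancel h2)

lemma vp_ne (hn : 2 ≤ n) (x : Vtx m n) : vp m n x ≠ x := by
  unfold vp
  split_ifs with h <;> intro hc
  · have h1 : x.2 + 1 = x.2 + 0 := by simpa using congrArg Prod.snd hc
    skip
    exact zmod_one_ne_zero hn (add_left_cancel h1)
  · have h1 : x.2 - 1 = x.2 := by simpa using congrArg Prod.snd hc
    have h2 : x.2 + 1 = x.2 + 0 := by linear_combination -h1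
    exact zmod_one_ne_zero hn (add_left_cancel h2)

lemma vp_snd_ne (hn : 2 ≤ n) (x : Vtx m n) (c : ZMod m) : (vp m n x).2 ≠ x.2 := by
  intro hc
  apply vp_ne m n hn x
  have h1 : (vp m n x).1 = x.1 := by unfold vp; split_ifs <;> rfl
  exact Prod.ext h1 hc

lemma rt_ne_lf (hm : 3 ≤ m) (x : Vtx m n) : rt m n x ≠ lf m n x := by
  intro hc
  have h1 : x.1 + 1 = x.1 - 1 := by simpa [rt, lf] using congrArg Prod.fst hc
  exact zmod_two_ne_zero hm (by linear_combination h1)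

end
set_option linter.unusedSectionVars false
section
variable (m n : ℕ) [NeZero m] [NeZero n]

lemma even_shift_up (hn2 : 2 ∣ n) (i : ZMod m) (j : ZMod n) :
    Even (i.val + (j + 1).val) ↔ ¬ Even (i.val + j.val) := by
  rw [even_iff_par m n (i, j+1), even_iff_par m n (i, j)]
  show q i + q (j + 1) = 0 ↔ ¬ (q i + q j = 0)
  rw [q_add hn2, q_one hn2, ← add_assoc]
  rcases zmod2_cases (q i + q j) with h | h <;> rw [h] <;> decide

lemma incident (hn2 : 2 ∣ n) {e : Sym2 (Vtx m n)} (he : e ∈ honeyEdges m n)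
    {w : Vtx m n} (hw : w ∈ e) :
    e = s(w, rt m n w) ∨ e = s(w, lf m n w) ∨ e = s(w, vp m n w) := by
  obtain ⟨p, hp, rfl⟩ := Finset.mem_image.1 he
  have hadj : HoneyAdj m n p.1 p.2 := (Finset.mem_filter.1 hp).2
  set a := p.1 with ha
  set b := p.2 with hb
  rcases hadj with ⟨h2, h1 | h1⟩ | ⟨h1, ⟨h2, hE⟩ | ⟨h2, hE⟩⟩ <;>
    rcases Sym2.mem_iff.1 hw with rfl | rfl
  · left
    rw [show rt m n a = b from
      Prod.ext (show a.1 + 1 = b.1 by linear_combination -h1) h2]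
  · right; left
    rw [show lf m n b = a from
      Prod.ext (show b.1 - 1 = a.1 by linear_combination h1) h2.symm, Sym2.eq_swap]
  · right; left
    rw [show lf m n a = b from
      Prod.ext (show a.1 - 1 = b.1 by linear_combination h1) h2]
  · left
    rw [show rt m n b = a from
      Prod.ext (show b.1 + 1 = a.1 by linear_combination -h1) h2.symm, Sym2.eq_swap]
  · right; right
    rw [show vp m n a = b by
      rw [vp, if_pos hE]
      exact Prod.ext h1 (show a.2 + 1 = b.2 by linear_combination -h2)]
  · right; right
    have hne : ¬ Even (b.1.val + b.2.val) := by
      rw [← h1, h2, even_shift_up m n hn2]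
      exact not_not_intro hE
    rw [show vp m n b = a by
      rw [vp, if_neg hne]
      exact Prod.ext h1.symm (show b.2 - 1 = a.2 by linear_combination h2), Sym2.eq_swap]
  · right; right
    have hne : ¬ Even (a.1.val + a.2.val) := by
      rw [h1, h2, even_shift_up m n hn2]
      exact not_not_intro hE
    rw [show vp m n a = b by
      rw [vp, if_neg hne]
      exact Prod.ext h1 (show a.2 - 1 = b.2 by linear_combination h2)]
  · right; right
    rw [show vp m n b = a by
      rw [vp, if_pos hE]
      exact Prod.ext h1.symm (show b.2 + 1 = a.2 by linear_combination -h2), Sym2.eq_swap]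
end
set_option linter.unusedSectionVars false
section
variable (m n : ℕ) [NeZero m] [NeZero n]

lemma ite_nn (C : Prop) [Decidable C] {x : ℝ} (hx : 0 ≤ x) :
    (0:ℝ) ≤ if C then x else 0 := by split_ifs <;> simp [hx]

lemma pinf_pos_merged_add (s t : WormState m n) (hmg : s.1.2.1 = s.1.2.2)
    (w : Vtx m n) (h1 : HoneyAdj m n s.1.2.2 w) (h2 : s(s.1.2.2, w) ∉ s.1.1)
    (h3 : t.1.1 = insert s(s.1.2.2, w) s.1.1)
    (h4 : (t.1.2.1 = w ∧ t.1.2.2 = s.1.2.2) ∨ (t.1.2.1 = s.1.2.2 ∧ t.1.2.2 = w)) :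
    0 < Pinf m n s t := by
  unfold Pinf
  rw [if_pos hmg]
  have hpos : (if ∃ v' : Vtx m n, HoneyAdj m n s.1.2.2 v' ∧ s(s.1.2.2, v') ∉ s.1.1 ∧
        t.1.1 = insert s(s.1.2.2, v') s.1.1 ∧
        ((t.1.2.1 = v' ∧ t.1.2.2 = s.1.2.2) ∨ (t.1.2.1 = s.1.2.2 ∧ t.1.2.2 = v'))
      then (1:ℝ)/6 else 0) = 1/6 := if_pos ⟨w, h1, h2, h3, h4⟩
  rw [hpos]
  have h0 : (0:ℝ) ≤ if t = s then (bdeg m n s.1.1 s.1.2.2 : ℝ) / 3 else 0 :=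
    ite_nn _ (by positivity)
  linarith

lemma pinf_pos_u_remove (s t : WormState m n) (hmg : ¬ (s.1.2.1 = s.1.2.2))
    (hd : bdeg m n s.1.1 s.1.2.1 = 3)
    (w : Vtx m n) (h1 : HoneyAdj m n s.1.2.1 w) (h2 : s(s.1.2.1, w) ∈ s.1.1)
    (h3 : t.1.1 = s.1.1.erase s(s.1.2.1, w)) (h4 : t.1.2.1 = w) (h5 : t.1.2.2 = s.1.2.2) :
    0 < Pinf m n s t := by
  unfold Pinf
  rw [if_neg hmg]
  have hpos : (if bdeg m n s.1.1 s.1.2.1 = 3 ∧ ∃ u' : Vtx m n, HoneyAdj m n s.1.2.1 u' ∧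
        s(s.1.2.1, u') ∈ s.1.1 ∧ t.1.1 = s.1.1.erase s(s.1.2.1, u') ∧
        t.1.2.1 = u' ∧ t.1.2.2 = s.1.2.2 then (1:ℝ)/6 else 0) = 1/6 :=
    if_pos ⟨hd, w, h1, h2, h3, h4, h5⟩
  rw [hpos]
  have hb : (0:ℝ) ≤ _ := ite_nn (bdeg m n s.1.1 s.1.2.1 = 1 ∧ ∃ u' : Vtx m n,
      HoneyAdj m n s.1.2.1 u' ∧ s(s.1.2.1, u') ∉ s.1.1 ∧
      t.1.1 = insert s(s.1.2.1, u') s.1.1 ∧ t.1.2.1 = u' ∧ t.1.2.2 = s.1.2.2)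
    (by norm_num : (0:ℝ) ≤ 1/4)
  have hc : (0:ℝ) ≤ _ := ite_nn (bdeg m n s.1.1 s.1.2.2 = 3 ∧ ∃ v' : Vtx m n,
      HoneyAdj m n s.1.2.2 v' ∧ s(s.1.2.2, v') ∈ s.1.1 ∧
      t.1.1 = s.1.1.erase s(s.1.2.2, v') ∧ t.1.2.1 = s.1.2.1 ∧ t.1.2.2 = v')
    (by norm_num : (0:ℝ) ≤ 1/6)
  have hdd : (0:ℝ) ≤ _ := ite_nn (bdeg m n s.1.1 s.1.2.2 = 1 ∧ ∃ v' : Vtx m n,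
      HoneyAdj m n s.1.2.2 v' ∧ s(s.1.2.2, v') ∉ s.1.1 ∧
      t.1.1 = insert s(s.1.2.2, v') s.1.1 ∧ t.1.2.1 = s.1.2.1 ∧ t.1.2.2 = v')
    (by norm_num : (0:ℝ) ≤ 1/4)
  linarith

lemma pinf_pos_u_add (s t : WormState m n) (hmg : ¬ (s.1.2.1 = s.1.2.2))
    (hd : bdeg m n s.1.1 s.1.2.1 = 1)
    (w : Vtx m n) (h1 : HoneyAdj m n s.1.2.1 w) (h2 : s(s.1.2.1, w) ∉ s.1.1)
    (h3 : t.1.1 = insert s(s.1.2.1, w) s.1.1) (h4 : t.1.2.1 = w) (h5 : t.1.2.2 = s.1.2.2) :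
    0 < Pinf m n s t := by
  unfold Pinf
  rw [if_neg hmg]
  have hpos : (if bdeg m n s.1.1 s.1.2.1 = 1 ∧ ∃ u' : Vtx m n, HoneyAdj m n s.1.2.1 u' ∧
        s(s.1.2.1, u') ∉ s.1.1 ∧ t.1.1 = insert s(s.1.2.1, u') s.1.1 ∧
        t.1.2.1 = u' ∧ t.1.2.2 = s.1.2.2 then (1:ℝ)/4 else 0) = 1/4 :=
    if_pos ⟨hd, w, h1, h2, h3, h4, h5⟩
  rw [hpos]
  have ha : (0:ℝ) ≤ _ := ite_nn (bdeg m n s.1.1 s.1.2.1 = 3 ∧ ∃ u' : Vtx m n,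
      HoneyAdj m n s.1.2.1 u' ∧ s(s.1.2.1, u') ∈ s.1.1 ∧
      t.1.1 = s.1.1.erase s(s.1.2.1, u') ∧ t.1.2.1 = u' ∧ t.1.2.2 = s.1.2.2)
    (by norm_num : (0:ℝ) ≤ 1/6)
  have hc : (0:ℝ) ≤ _ := ite_nn (bdeg m n s.1.1 s.1.2.2 = 3 ∧ ∃ v' : Vtx m n,
      HoneyAdj m n s.1.2.2 v' ∧ s(s.1.2.2, v') ∈ s.1.1 ∧
      t.1.1 = s.1.1.erase s(s.1.2.2, v') ∧ t.1.2.1 = s.1.2.1 ∧ t.1.2.2 = v')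
    (by norm_num : (0:ℝ) ≤ 1/6)
  have hdd : (0:ℝ) ≤ _ := ite_nn (bdeg m n s.1.1 s.1.2.2 = 1 ∧ ∃ v' : Vtx m n,
      HoneyAdj m n s.1.2.2 v' ∧ s(s.1.2.2, v') ∉ s.1.1 ∧
      t.1.1 = insert s(s.1.2.2, v') s.1.1 ∧ t.1.2.1 = s.1.2.1 ∧ t.1.2.2 = v')
    (by norm_num : (0:ℝ) ≤ 1/4)
  linarith

lemma pinf_pos_v_remove (s t : WormState m n) (hmg : ¬ (s.1.2.1 = s.1.2.2))
    (hd : bdeg m n s.1.1 s.1.2.2 = 3)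
    (w : Vtx m n) (h1 : HoneyAdj m n s.1.2.2 w) (h2 : s(s.1.2.2, w) ∈ s.1.1)
    (h3 : t.1.1 = s.1.1.erase s(s.1.2.2, w)) (h4 : t.1.2.1 = s.1.2.1) (h5 : t.1.2.2 = w) :
    0 < Pinf m n s t := by
  unfold Pinf
  rw [if_neg hmg]
  have hpos : (if bdeg m n s.1.1 s.1.2.2 = 3 ∧ ∃ v' : Vtx m n, HoneyAdj m n s.1.2.2 v' ∧
        s(s.1.2.2, v') ∈ s.1.1 ∧ t.1.1 = s.1.1.erase s(s.1.2.2, v') ∧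
        t.1.2.1 = s.1.2.1 ∧ t.1.2.2 = v' then (1:ℝ)/6 else 0) = 1/6 :=
    if_pos ⟨hd, w, h1, h2, h3, h4, h5⟩
  rw [hpos]
  have ha : (0:ℝ) ≤ _ := ite_nn (bdeg m n s.1.1 s.1.2.1 = 3 ∧ ∃ u' : Vtx m n,
      HoneyAdj m n s.1.2.1 u' ∧ s(s.1.2.1, u') ∈ s.1.1 ∧
      t.1.1 = s.1.1.erase s(s.1.2.1, u') ∧ t.1.2.1 = u' ∧ t.1.2.2 = s.1.2.2)
    (by norm_num : (0:ℝ) ≤ 1/6)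
  have hb : (0:ℝ) ≤ _ := ite_nn (bdeg m n s.1.1 s.1.2.1 = 1 ∧ ∃ u' : Vtx m n,
      HoneyAdj m n s.1.2.1 u' ∧ s(s.1.2.1, u') ∉ s.1.1 ∧
      t.1.1 = insert s(s.1.2.1, u') s.1.1 ∧ t.1.2.1 = u' ∧ t.1.2.2 = s.1.2.2)
    (by norm_num : (0:ℝ) ≤ 1/4)
  have hdd : (0:ℝ) ≤ _ := ite_nn (bdeg m n s.1.1 s.1.2.2 = 1 ∧ ∃ v' : Vtx m n,
      HoneyAdj m n s.1.2.2 v' ∧ s(s.1.2.2, v') ∉ s.1.1 ∧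
      t.1.1 = insert s(s.1.2.2, v') s.1.1 ∧ t.1.2.1 = s.1.2.1 ∧ t.1.2.2 = v')
    (by norm_num : (0:ℝ) ≤ 1/4)
  linarith

end
set_option linter.unusedSectionVars false
section
variable (m n : ℕ) [NeZero m] [NeZero n]

lemma isWormState_merged (A : Finset (Sym2 (Vtx m n))) (hA : A ⊆ honeyEdges m n)
    (hev : ∀ y, ¬ Odd (bdeg m n A y)) (x : Vtx m n) : IsWormState m n A x x :=
  ⟨hA, fun y => iff_of_false (hev y) (by simp)⟩

/-- merged worm state -/
noncomputable def mst (A : Finset (Sym2 (Vtx m n))) (hA : A ⊆ honeyEdges m n)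
    (hev : ∀ y, ¬ Odd (bdeg m n A y)) (x : Vtx m n) : WormState m n :=
  ⟨(A, x, x), isWormState_merged m n A hA hev x⟩

lemma isWormState_insert (A : Finset (Sym2 (Vtx m n))) (hA : A ⊆ honeyEdges m n)
    (hev : ∀ y, ¬ Odd (bdeg m n A y)) {x w : Vtx m n} (hadj : HoneyAdj m n x w)
    (hxw : x ≠ w) (hvac : s(x, w) ∉ A) :
    IsWormState m n (insert s(x, w) A) x w := by
  refine ⟨Finset.insert_subset (mem_honeyEdges m n hadj) hA, fun y => ?_⟩
  rw [bdeg_insert m n A _ hvac y]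
  by_cases hy : y ∈ s(x, w)
  · rw [if_pos hy]
    exact iff_of_true (Even.add_one (Nat.not_odd_iff_even.1 (hev y)))
      ⟨Sym2.mem_iff.1 hy, hxw⟩
  · rw [if_neg hy, add_zero]
    refine iff_of_false (hev y) ?_
    rintro ⟨h | h, -⟩ <;> subst h <;> exact hy (by simp)

lemma isWormState_erase (A : Finset (Sym2 (Vtx m n))) (hA : A ⊆ honeyEdges m n)
    (hev : ∀ y, ¬ Odd (bdeg m n A y)) {w z : Vtx m n} (hwz : w ≠ z)
    (hocc : s(w, z) ∈ A) :
    IsWormState m n (A.erase s(w, z)) w z := by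
  refine ⟨(Finset.erase_subset _ _).trans hA, fun y => ?_⟩
  have h1 := bdeg_erase m n A _ hocc y
  by_cases hy : y ∈ s(w, z)
  · rw [if_pos hy] at h1
    refine iff_of_true ?_ ⟨Sym2.mem_iff.1 hy, hwz⟩
    have := hev y
    rw [Nat.not_odd_iff_even, Nat.even_iff] at this
    rw [Nat.odd_iff]; omega
  · rw [if_neg hy, add_zero] at h1
    rw [← h1]
    refine iff_of_false (hev y) ?_
    rintro ⟨h | h, -⟩ <;> subst h <;> exact hy (by simp)

lemma isWormState_insert_erase (A : Finset (Sym2 (Vtx m n))) (hA : A ⊆ honeyEdges m n)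
    (hev : ∀ y, ¬ Odd (bdeg m n A y)) {x w z : Vtx m n}
    (hadj1 : HoneyAdj m n x w) (hadj2 : HoneyAdj m n w z)
    (hxw : x ≠ w) (hwz : w ≠ z) (hxz : x ≠ z)
    (hvac : s(x, w) ∉ A) (hocc : s(w, z) ∈ A) :
    IsWormState m n ((insert s(x, w) A).erase s(w, z)) x z := by
  have h12 : s(x, w) ≠ s(w, z) := by
    rw [ne_eq, Sym2.eq_iff]
    push_neg
    exact ⟨fun h => absurd h hxw, fun h _ => absurd h hxz⟩
  refine ⟨(Finset.erase_subset _ _).trans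
    (Finset.insert_subset (mem_honeyEdges m n hadj1) hA), fun y => ?_⟩
  have h1 := bdeg_erase m n (insert s(x, w) A) s(w, z)
    (Finset.mem_insert_of_mem hocc) y
  have h2 := bdeg_insert m n A s(x, w) hvac y
  have hevy := hev y
  rw [Nat.not_odd_iff_even, Nat.even_iff] at hevy
  rw [Nat.odd_iff]
  by_cases hy1 : y ∈ s(x, w) <;> by_cases hy2 : y ∈ s(w, z) <;>
    simp only [hy1, hy2, if_pos, if_neg, if_true, if_false, add_zero] at h1 h2
  · -- y ∈ both: y = w
    have hyw : y = w := by
      rcases Sym2.mem_iff.1 hy1 with h | h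
      · rcases Sym2.mem_iff.1 hy2 with h' | h'
        · exact h'
        · exact absurd (h.symm.trans h') hxz
      · exact h
    refine iff_of_false (by omega) ?_
    rintro ⟨h | h, -⟩
    · exact hxw (h.symm.trans hyw)
    · exact hwz (h.symm.trans hyw).symm
  · -- y ∈ e1 only: y = x
    have hyx : y = x := by
      rcases Sym2.mem_iff.1 hy1 with h | h
      · exact h
      · exact absurd (show y ∈ s(w, z) by rw [h]; simp) hy2
    refine iff_of_true (by omega) ⟨Or.inl hyx, hxz⟩
  · -- y ∈ e2 only: y = z
    have hyz : y = z := by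
      rcases Sym2.mem_iff.1 hy2 with h | h
      · exact absurd (show y ∈ s(x, w) by rw [h]; simp) hy1
      · exact h
    refine iff_of_true (by omega) ⟨Or.inr hyz, hxz⟩
  · refine iff_of_false (by omega) ?_
    rintro ⟨h | h, -⟩ <;> subst h
    · exact hy1 (by simp)
    · exact hy2 (by simp)

end
set_option linter.unusedSectionVars false
section
variable (m n : ℕ) [NeZero m] [NeZero n]

lemma hop (A : Finset (Sym2 (Vtx m n))) (hA : A ⊆ honeyEdges m n)
    (hev : ∀ y, ¬ Odd (bdeg m n A y)) {x w : Vtx m n} (hadj : HoneyAdj m n x w)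
    (hxw : x ≠ w) (hvac : s(x, w) ∉ A) (hdx : bdeg m n A x = 2) :
    Reaches m n (mst m n A hA hev x) (mst m n A hA hev w) := by
  set s1 : WormState m n := ⟨(insert s(x, w) A, x, w),
    isWormState_insert m n A hA hev hadj hxw hvac⟩ with hs1
  have step1 : 0 < Pinf m n (mst m n A hA hev x) s1 := by
    apply pinf_pos_merged_add m n _ _ rfl w hadj hvac rfl
    exact Or.inr ⟨rfl, rfl⟩
  have hd3 : bdeg m n (insert s(x, w) A) x = 3 := by
    rw [bdeg_insert m n A _ hvac x, if_pos (by simp), hdx]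
  have step2 : 0 < Pinf m n s1 (mst m n A hA hev w) :=
    pinf_pos_u_remove m n s1 (mst m n A hA hev w) hxw hd3 w hadj
      (Finset.mem_insert_self _ _) (Finset.erase_insert hvac).symm rfl rfl
  exact reaches_trans m n (reaches_single m n step1) (reaches_single m n step2)

lemma slide (A : Finset (Sym2 (Vtx m n))) (hA : A ⊆ honeyEdges m n)
    (hev : ∀ y, ¬ Odd (bdeg m n A y)) {x w z : Vtx m n}
    (hadj1 : HoneyAdj m n x w) (hadj2 : HoneyAdj m n w z)
    (hxw : x ≠ w) (hwz : w ≠ z) (hxz : x ≠ z)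
    (hvac : s(x, w) ∉ A) (hocc : s(w, z) ∈ A)
    (hdx : bdeg m n A x = 2) (hdw : bdeg m n A w = 2) :
    Reaches m n (mst m n A hA hev x) (mst m n A hA hev z) := by
  have h12 : s(x, w) ≠ s(w, z) := by
    rw [ne_eq, Sym2.eq_iff]
    push_neg
    exact ⟨fun h => absurd h hxw, fun h _ => absurd h hxz⟩
  set s1 : WormState m n := ⟨(insert s(x, w) A, x, w),
    isWormState_insert m n A hA hev hadj1 hxw hvac⟩ with hs1
  set s2 : WormState m n := ⟨((insert s(x, w) A).erase s(w, z), x, z),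
    isWormState_insert_erase m n A hA hev hadj1 hadj2 hxw hwz hxz hvac hocc⟩ with hs2
  set s3 : WormState m n := ⟨(A.erase s(w, z), w, z),
    isWormState_erase m n A hA hev hwz hocc⟩ with hs3
  have step1 : 0 < Pinf m n (mst m n A hA hev x) s1 := by
    apply pinf_pos_merged_add m n _ _ rfl w hadj1 hvac rfl
    exact Or.inr ⟨rfl, rfl⟩
  have hdw3 : bdeg m n (insert s(x, w) A) w = 3 := by
    rw [bdeg_insert m n A _ hvac w, if_pos (by simp), hdw]
  have step2 : 0 < Pinf m n s1 s2 :=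
    pinf_pos_v_remove m n s1 s2 hxw hdw3 z hadj2
      (Finset.mem_insert_of_mem hocc) rfl rfl rfl
  have hdx3 : bdeg m n ((insert s(x, w) A).erase s(w, z)) x = 3 := by
    have h1 := bdeg_erase m n (insert s(x, w) A) s(w, z)
      (Finset.mem_insert_of_mem hocc) x
    rw [if_neg (by simp only [Sym2.mem_iff]; push_neg; exact ⟨hxw, hxz⟩),
      add_zero] at h1
    rw [← h1, bdeg_insert m n A _ hvac x, if_pos (by simp), hdx]
  have he1mem : s(x, w) ∈ (insert s(x, w) A).erase s(w, z) :=
    Finset.mem_erase.2 ⟨h12, Finset.mem_insert_self _ _⟩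
  have herase : A.erase s(w, z) = ((insert s(x, w) A).erase s(w, z)).erase s(x, w) := by
    ext c
    simp only [Finset.mem_erase, Finset.mem_insert]
    constructor
    · rintro ⟨h2c, hcA⟩
      exact ⟨fun h => hvac (h ▸ hcA), h2c, Or.inr hcA⟩
    · rintro ⟨h1c, h2c, hc | hc⟩
      · exact absurd hc h1c
      · exact ⟨h2c, hc⟩
  have step3 : 0 < Pinf m n s2 s3 :=
    pinf_pos_u_remove m n s2 s3 hxz hdx3 w hadj1 he1mem herase rfl rfl
  have hdw1 : bdeg m n (A.erase s(w, z)) w = 1 := by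
    have h1 := bdeg_erase m n A s(w, z) hocc w
    rw [if_pos (by simp)] at h1
    omega
  have step4 : 0 < Pinf m n s3 (mst m n A hA hev z) :=
    pinf_pos_u_add m n s3 (mst m n A hA hev z) hwz hdw1 z hadj2
      (Finset.notMem_erase _ _) (Finset.insert_erase hocc).symm rfl rfl
  exact reaches_trans m n (reaches_single m n step1) (reaches_trans m n
    (reaches_single m n step2) (reaches_trans m n (reaches_single m n step3)
    (reaches_single m n step4)))

end
set_option linter.unusedSectionVars false
section
variable (m n : ℕ) [NeZero m] [NeZero n]

lemma rt_lf (x : Vtx m n) : rt m n (lf m n x) = x := by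
  unfold rt lf; exact Prod.ext (by ring) rfl

lemma lf_rt (x : Vtx m n) : lf m n (rt m n x) = x := by
  unfold rt lf; exact Prod.ext (by ring) rfl

lemma edge_ne_rt_lf (hm3 : 3 ≤ m) (x : Vtx m n) :
    s(x, rt m n x) ≠ s(x, lf m n x) := by
  rw [ne_eq, Sym2.eq_iff]
  rintro (⟨-, h⟩ | ⟨h1, h2⟩)
  · exact rt_ne_lf m n hm3 x h
  · exact rt_ne m n (by omega) x h2

lemma edge_ne_rt_vp (hm2 : 2 ≤ m) (hn2 : 2 ≤ n) (x : Vtx m n) :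
    s(x, rt m n x) ≠ s(x, vp m n x) := by
  rw [ne_eq, Sym2.eq_iff]
  rintro (⟨-, h⟩ | ⟨h1, h2⟩)
  · exact vp_snd_ne m n hn2 x 0 (congrArg Prod.snd h).symm
  · exact vp_ne m n hn2 x h1.symm

lemma edge_ne_lf_vp (hm2 : 2 ≤ m) (hn2 : 2 ≤ n) (x : Vtx m n) :
    s(x, lf m n x) ≠ s(x, vp m n x) := by
  rw [ne_eq, Sym2.eq_iff]
  rintro (⟨-, h⟩ | ⟨h1, h2⟩)
  · exact vp_snd_ne m n hn2 x 0 (congrArg Prod.snd h).symm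
  · exact vp_ne m n hn2 x h1.symm

lemma bdeg_le_three (hn2 : 2 ∣ n) (A : Finset (Sym2 (Vtx m n)))
    (hA : A ⊆ honeyEdges m n) (x : Vtx m n) : bdeg m n A x ≤ 3 := by
  have hsub : A.filter (fun e => x ∈ e) ⊆
      {s(x, rt m n x), s(x, lf m n x), s(x, vp m n x)} := by
    intro e he
    obtain ⟨heA, hxe⟩ := Finset.mem_filter.1 he
    rcases incident m n hn2 (hA heA) hxe with h | h | h <;> simp [h]
  calc bdeg m n A x ≤ ({s(x, rt m n x), s(x, lf m n x), s(x, vp m n x)} :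
      Finset (Sym2 (Vtx m n))).card := Finset.card_le_card hsub
    _ ≤ 3 := by
      apply le_trans (Finset.card_insert_le _ _)
      have := Finset.card_insert_le s(x, lf m n x) ({s(x, vp m n x)} :
        Finset (Sym2 (Vtx m n)))
      simp at this ⊢
      omega

lemma bdeg_pos_of_mem (A : Finset (Sym2 (Vtx m n))) {e : Sym2 (Vtx m n)}
    (he : e ∈ A) {x : Vtx m n} (hx : x ∈ e) : 1 ≤ bdeg m n A x :=
  Finset.card_pos.2 ⟨e, Finset.mem_filter.2 ⟨he, hx⟩⟩

lemma bdeg_eq_two (hn2 : 2 ∣ n) (A : Finset (Sym2 (Vtx m n)))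
    (hA : A ⊆ honeyEdges m n) (hev : ∀ y, ¬ Odd (bdeg m n A y))
    {e : Sym2 (Vtx m n)} (he : e ∈ A) {x : Vtx m n} (hx : x ∈ e) :
    bdeg m n A x = 2 := by
  have h1 := bdeg_pos_of_mem m n A he hx
  have h2 := bdeg_le_three m n hn2 A hA x
  have h3 := hev x
  rw [Nat.not_odd_iff_even, Nat.even_iff] at h3
  omega

lemma vvac_of_two_horiz (hm3 : 3 ≤ m) (hn2' : 2 ≤ n) (A : Finset (Sym2 (Vtx m n)))
    {x : Vtx m n} (hdx : bdeg m n A x = 2)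
    (hR : s(x, rt m n x) ∈ A) (hL : s(x, lf m n x) ∈ A) :
    s(x, vp m n x) ∉ A := by
  intro hV
  have hsub : ({s(x, rt m n x), s(x, lf m n x), s(x, vp m n x)} :
      Finset (Sym2 (Vtx m n))) ⊆ A.filter (fun e => x ∈ e) := by
    intro e he
    simp only [Finset.mem_insert, Finset.mem_singleton] at he
    rcases he with rfl | rfl | rfl <;> exact Finset.mem_filter.2 ⟨by assumption, by simp⟩
  have hcard : ({s(x, rt m n x), s(x, lf m n x), s(x, vp m n x)} :
      Finset (Sym2 (Vtx m n))).card = 3 := by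
    rw [Finset.card_insert_of_notMem, Finset.card_insert_of_notMem] <;>
      simp [edge_ne_rt_lf m n hm3 x, edge_ne_rt_vp m n (by omega) hn2' x,
        edge_ne_lf_vp m n (by omega) hn2' x]
  have := Finset.card_le_card hsub
  rw [hcard] at this
  unfold bdeg at hdx
  omega

lemma two_horiz_of_deg2 (hm3 : 3 ≤ m) (hn2' : 2 ≤ n) (hn2 : 2 ∣ n)
    (A : Finset (Sym2 (Vtx m n))) (hA : A ⊆ honeyEdges m n)
    {w : Vtx m n} (hdw : bdeg m n A w = 2) (hvv : s(w, vp m n w) ∉ A) :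
    s(w, rt m n w) ∈ A ∧ s(w, lf m n w) ∈ A := by
  have hsub : A.filter (fun e => w ∈ e) ⊆
      ({s(w, rt m n w), s(w, lf m n w)} : Finset (Sym2 (Vtx m n))) := by
    intro e he
    obtain ⟨heA, hwe⟩ := Finset.mem_filter.1 he
    rcases incident m n hn2 (hA heA) hwe with h | h | h
    · simp [h]
    · simp [h]
    · exact absurd (h ▸ heA) hvv
  have hcard : ({s(w, rt m n w), s(w, lf m n w)} : Finset (Sym2 (Vtx m n))).card = 2 := by
    rw [Finset.card_insert_of_notMem (by simp [edge_ne_rt_lf m n hm3 w])]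
    simp
  have heq : A.filter (fun e => w ∈ e) =
      ({s(w, rt m n w), s(w, lf m n w)} : Finset (Sym2 (Vtx m n))) := by
    apply Finset.eq_of_subset_of_card_le hsub
    rw [hcard]
    unfold bdeg at hdw
    omega
  constructor
  · exact (Finset.mem_filter.1 (heq ▸ (by simp : s(w, rt m n w) ∈
      ({s(w, rt m n w), s(w, lf m n w)} : Finset (Sym2 (Vtx m n)))))).1
  · exact (Finset.mem_filter.1 (heq ▸ (by simp : s(w, lf m n w) ∈
      ({s(w, rt m n w), s(w, lf m n w)} : Finset (Sym2 (Vtx m n)))))).1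

lemma par_adj (hm2 : 2 ∣ m) (hn2 : 2 ∣ n) {a b : Vtx m n} (h : HoneyAdj m n a b) :
    par m n b = par m n a + 1 := by
  have key : ∀ c : ZMod 2, c = c + 1 + 1 := by decide
  rcases h with ⟨h2, h1 | h1⟩ | ⟨h1, ⟨h2, -⟩ | ⟨h2, -⟩⟩
  · show q b.1 + q b.2 = q a.1 + q a.2 + 1
    rw [h1, ← h2, q_add hm2, q_one hm2]; ring
  · show q b.1 + q b.2 = q a.1 + q a.2 + 1
    rw [h1, ← h2, q_add hm2, q_one hm2]; linear_combination key 0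
  · show q b.1 + q b.2 = q a.1 + q a.2 + 1
    rw [← h1, h2, q_add hn2, q_one hn2]; ring
  · show q b.1 + q b.2 = q a.1 + q a.2 + 1
    rw [← h1, h2, q_add hn2, q_one hn2]; linear_combination key 0

end
set_option linter.unusedSectionVars false
section
variable (m n : ℕ) [NeZero m] [NeZero n]

lemma q_int {k : ℕ} [NeZero k] (hk : 2 ∣ k) (c : ℤ) :
    q ((c : ZMod k)) = (c : ZMod 2) := by
  rw [q_hom hk]; exact map_intCast _ c

lemma q_sub {k : ℕ} [NeZero k] (hk : 2 ∣ k) (c d : ZMod k) :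
    q (c - d) = q c - q d := by
  rw [q_hom hk, q_hom hk, q_hom hk, map_sub]

lemma val_cast_self {k : ℕ} [NeZero k] (c : ZMod k) : ((c.val : ℕ) : ZMod k) = c :=
  ZMod.natCast_rightInverse c

end
theorem transient_lemma (m n : ℕ) [NeZero m] [NeZero n]
    (hm : Even m) (hn : Even n) (hm4 : 4 ≤ m) (hn4 : 4 ≤ n)
    (st : WormState m n) (u : Vtx m n) (hst : st.1.2 = (u, u))
    (hdeg : bdeg m n st.1.1 u = 2) (hne : st.1.1 ≠ Hconfig m n) :
    ∃ v v' : Vtx m n, v'.2 = v.2 ∧ v'.1 = v.1 + 1 ∧ s(v, v') ∉ st.1.1 ∧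
      ∃ t1 : WormState m n, t1.1 = (st.1.1, v, v) ∧ Reaches m n st t1 := by
  have hm2 : 2 ∣ m := even_iff_two_dvd.mp hm
  have hn2 : 2 ∣ n := even_iff_two_dvd.mp hn
  set A := st.1.1 with hAdef
  have hA : A ⊆ honeyEdges m n := st.2.1
  have hev : ∀ y, ¬ Odd (bdeg m n A y) := by
    intro y ho
    have h1 := (st.2.2 y).1 ho
    exact h1.2 (by rw [congrArg Prod.fst hst, congrArg Prod.snd hst])
  have hstM : st = mst m n A hA hev u := Subtype.ext (Prod.ext rfl hst)
  by_contra hcon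
  push_neg at hcon
  have shape : ∀ v v' : Vtx m n, v'.2 = v.2 → v'.1 = v.1 + 1 → s(v, v') ∉ A →
      ∀ t1 : WormState m n, t1.1 = (A, v, v) → ¬ Reaches m n st t1 := hcon
  set Good : Vtx m n → Prop :=
    fun x => Reaches m n (mst m n A hA hev u) (mst m n A hA hev x) with hGoodDef
  set GD : Vtx m n → Prop := fun x => bdeg m n A x = 2 ∧ Good x with hGDdef
  have keyR : ∀ x, Good x → s(x, rt m n x) ∈ A := by
    intro x hx
    by_contra hvac
    exact shape x (rt m n x) rfl rfl hvac (mst m n A hA hev x) rfl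
      (by rw [hstM]; exact hx)
  have keyL : ∀ x, GD x → s(x, lf m n x) ∈ A := by
    intro x hx
    by_contra hvac
    have hhop := hop m n A hA hev (honeyAdj_lf m n x) (lf_ne m n (by omega) x).symm
      hvac hx.1
    have hGlf : Good (lf m n x) := reaches_trans m n hx.2 hhop
    have := keyR (lf m n x) hGlf
    rw [rt_lf] at this
    exact hvac (by rw [Sym2.eq_swap]; exact this)
  have keyV : ∀ x, GD x → s(x, vp m n x) ∉ A := fun x hx =>
    vvac_of_two_horiz m n (by omega) (by omega) A hx.1 (keyR x hx.2) (keyL x hx)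
  have keyW : ∀ x, GD x → bdeg m n A (vp m n x) = 2 := by
    intro x hx
    have hvac := keyV x hx
    have hne0 : bdeg m n A (vp m n x) ≠ 0 := by
      intro h0
      have hhop := hop m n A hA hev (honeyAdj_vp m n hn2 x)
        (vp_ne m n (by omega) x).symm hvac hx.1
      have hG : Good (vp m n x) := reaches_trans m n hx.2 hhop
      have h1 := bdeg_pos_of_mem m n A (keyR (vp m n x) hG)
        (show vp m n x ∈ s(vp m n x, rt m n (vp m n x)) by simp)
      omega
    have h2 := bdeg_le_three m n hn2 A hA (vp m n x)
    have h3 := hev (vp m n x)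
    rw [Nat.not_odd_iff_even, Nat.even_iff] at h3
    omega
  have step : ∀ x, GD x → GD (rt m n (vp m n x)) ∧ GD (lf m n (vp m n x)) := by
    intro x hx
    have hvac := keyV x hx
    have hdw := keyW x hx
    have hwvac : s(vp m n x, vp m n (vp m n x)) ∉ A := by
      rw [vp_vp m n hn2 x, Sym2.eq_swap]
      exact hvac
    obtain ⟨hwr, hwl⟩ := two_horiz_of_deg2 m n (by omega) (by omega) hn2 A hA hdw hwvac
    have hxw : x ≠ vp m n x := (vp_ne m n (by omega) x).symm
    constructor
    · refine ⟨bdeg_eq_two m n hn2 A hA hev hwr (by simp), ?_⟩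
      refine reaches_trans m n hx.2 (slide m n A hA hev (honeyAdj_vp m n hn2 x)
        (honeyAdj_rt m n (vp m n x)) hxw (rt_ne m n (by omega) (vp m n x)).symm
        ?_ hvac hwr hx.1 hdw)
      intro h
      exact vp_snd_ne m n (by omega) x 0 (congrArg Prod.snd h).symm
    · refine ⟨bdeg_eq_two m n hn2 A hA hev hwl (by simp), ?_⟩
      refine reaches_trans m n hx.2 (slide m n A hA hev (honeyAdj_vp m n hn2 x)
        (honeyAdj_lf m n (vp m n x)) hxw (lf_ne m n (by omega) (vp m n x)).symm
        ?_ hvac hwl hx.1 hdw)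
      intro h
      exact vp_snd_ne m n (by omega) x 0 (congrArg Prod.snd h).symm
  set ε : ℤ := if par m n u = 0 then 1 else -1 with hεdef
  have hεcases : ε = 1 ∨ ε = -1 := by
    rw [hεdef]; split_ifs <;> simp
  have vp_dir : ∀ x : Vtx m n, par m n x = par m n u →
      vp m n x = (x.1, x.2 + ((ε : ℤ) : ZMod n)) := by
    intro x hp
    by_cases h0 : par m n u = 0
    · have hε1 : ε = 1 := by rw [hεdef, if_pos h0]
      rw [hε1]
      push_cast
      exact if_pos ((even_iff_par m n x).2 (hp.trans h0))
    · have hε1 : ε = -1 := by rw [hεdef, if_neg h0]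
      rw [hε1]
      push_cast
      have hne : ¬ Even (x.1.val + x.2.val) := by
        rw [even_iff_par, hp]; exact h0
      rw [vp, if_neg hne]
      exact Prod.ext rfl (by ring)
  have traj : ∀ t : ℕ, ∀ a : ℤ, a.natAbs ≤ t → (2:ℤ) ∣ (a - t) →
      GD (u.1 + ((a : ℤ) : ZMod m), u.2 + ((ε * t : ℤ) : ZMod n)) := by
    intro t
    induction t with
    | zero =>
      intro a h1 h2
      have ha : a = 0 := by omega
      subst ha
      simp only [Nat.cast_zero, mul_zero, Int.cast_zero, add_zero]
      exact ⟨hdeg, reaches_refl m n _⟩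
    | succ t ih =>
      intro a h1 h2
      have hstep : ∀ a' : ℤ, a'.natAbs ≤ t → (2:ℤ) ∣ (a' - t) →
          GD (u.1 + ((a' + 1 : ℤ) : ZMod m), u.2 + ((ε * (t+1) : ℤ) : ZMod n)) ∧
          GD (u.1 + ((a' - 1 : ℤ) : ZMod m), u.2 + ((ε * (t+1) : ℤ) : ZMod n)) := by
        intro a' ha1 ha2
        have hGD := ih a' ha1 ha2
        set p : Vtx m n := (u.1 + ((a' : ℤ) : ZMod m), u.2 + ((ε * t : ℤ) : ZMod n))
          with hpdef
        have hppar : par m n p = par m n u := by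
          show q (u.1 + _) + q (u.2 + _) = q u.1 + q u.2
          rw [q_add hm2, q_add hn2, q_int hm2, q_int hn2]
          have h4 : ((a' : ℤ) : ZMod 2) + ((ε * t : ℤ) : ZMod 2) = 0 := by
            rw [← Int.cast_add, ZMod.intCast_zmod_eq_zero_iff_dvd]
            rcases hεcases with h | h <;> rw [h] <;> omega
          linear_combination h4
        have hvpp := vp_dir p hppar
        obtain ⟨hR, hL⟩ := step p hGD
        constructor
        · have hpt : ((u.1 + ((a' + 1 : ℤ) : ZMod m),
              u.2 + ((ε * (t+1) : ℤ) : ZMod n)) : Vtx m n) = rt m n (vp m n p) := by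
            rw [hvpp, rt]
            exact Prod.ext (by push_cast; ring) (by push_cast; rw [hpdef]; push_cast; ring)
          rw [hpt]; exact hR
        · have hpt : ((u.1 + ((a' - 1 : ℤ) : ZMod m),
              u.2 + ((ε * (t+1) : ℤ) : ZMod n)) : Vtx m n) = lf m n (vp m n p) := by
            rw [hvpp, lf]
            exact Prod.ext (by push_cast; ring) (by push_cast; rw [hpdef]; push_cast; ring)
          rw [hpt]; exact hL
      by_cases hpos : 1 ≤ a
      · have := (hstep (a - 1) (by omega) (by omega)).1
        have hxx : a - 1 + 1 = a := by ring
        rw [hxx] at this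
        exact_mod_cast this
      · have := (hstep (a + 1) (by omega) (by omega)).2
        have hxx : a + 1 - 1 = a := by ring
        rw [hxx] at this
        exact_mod_cast this
  have allGD : ∀ y : Vtx m n, par m n y = par m n u → GD y := by
    intro y hy
    set b : ℕ := (y.1 - u.1).val with hbdef
    set w2 : ZMod n := if par m n u = 0 then y.2 - u.2 else u.2 - y.2 with hw2def
    set c : ℕ := w2.val with hcdef
    set t : ℕ := c + n * (b + 3) with htdef
    have hnb : b ≤ t := by
      have h5 : 1 * (b + 3) ≤ n * (b + 3) :=
        Nat.mul_le_mul_right _ (by omega : 1 ≤ n)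
      omega
    have hq1 : ((b : ℕ) : ZMod 2) = q (y.1 - u.1) := rfl
    have hq2 : ((c : ℕ) : ZMod 2) = q w2 := rfl
    have hnegid : ∀ z : ZMod 2, -z = z := by decide
    have hqw2 : q w2 = q (y.2 - u.2) := by
      rw [hw2def]
      split_ifs with h
      · rfl
      · rw [show u.2 - y.2 = -(y.2 - u.2) by ring, q_hom hn2, map_neg, ← q_hom hn2,
          hnegid]
    have hbceq : ((b : ℕ) : ZMod 2) = ((c : ℕ) : ZMod 2) := by
      rw [hq1, hq2, hqw2, q_sub hm2, q_sub hn2]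
      have hy' : q y.1 + q y.2 = q u.1 + q u.2 := hy
      have hswap : ∀ z w : ZMod 2, z - w = w - z := by decide
      linear_combination hy' + hswap (q u.2) (q y.2)
    have h6 : (2:ℤ) ∣ ((b:ℤ) - (c:ℤ)) := by
      have h6' : ((((b:ℤ) - (c:ℤ)) : ℤ) : ZMod 2) = 0 := by
        push_cast
        rw [hbceq]
        ring
      exact_mod_cast (ZMod.intCast_zmod_eq_zero_iff_dvd _ 2).1 h6'
    have h7 : (2:ℤ) ∣ (n:ℤ) := by exact_mod_cast Int.natCast_dvd_natCast.2 hn2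
    have h8 : (2:ℤ) ∣ (n:ℤ) * ((b:ℤ) + 3) := Dvd.dvd.mul_right h7 _
    have h9 : (2:ℤ) ∣ ((b:ℤ) - (t:ℤ)) := by
      have ht' : (t:ℤ) = (c:ℤ) + (n:ℤ) * ((b:ℤ) + 3) := by push_cast [htdef]; ring
      rw [ht', show (b:ℤ) - ((c:ℤ) + (n:ℤ)*((b:ℤ)+3)) =
        ((b:ℤ) - (c:ℤ)) - (n:ℤ)*((b:ℤ)+3) by ring]
      exact dvd_sub h6 h8
    have hGDy := traj t (b:ℤ) (by simpa using hnb) h9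
    have hcoord1 : u.1 + (((b:ℤ)) : ZMod m) = y.1 := by
      push_cast
      rw [hbdef, val_cast_self]
      ring
    have hcoord2 : u.2 + ((ε * t : ℤ) : ZMod n) = y.2 := by
      by_cases h : par m n u = 0
      · have hε1 : ε = 1 := by rw [hεdef, if_pos h]
        have hw2' : w2 = y.2 - u.2 := by rw [hw2def, if_pos h]
        rw [hε1, one_mul]
        push_cast [htdef]
        rw [ZMod.natCast_self, hcdef, val_cast_self, hw2']
        ring
      · have hε1 : ε = -1 := by rw [hεdef, if_neg h]
        have hw2' : w2 = u.2 - y.2 := by rw [hw2def, if_neg h]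
        rw [hε1]
        push_cast [htdef]
        rw [ZMod.natCast_self, hcdef, val_cast_self, hw2']
        ring
    have hpt : ((u.1 + (((b:ℤ)) : ZMod m), u.2 + ((ε * t : ℤ) : ZMod n)) : Vtx m n)
        = y := Prod.ext hcoord1 hcoord2
    rw [← hpt]
    exact hGDy
  apply hne
  apply Finset.Subset.antisymm
  · intro e he
    obtain ⟨p, hp, rfl⟩ := Finset.mem_image.1 (hA he)
    have hadj : HoneyAdj m n p.1 p.2 := (Finset.mem_filter.1 hp).2
    have hpar2 := par_adj m n hm2 hn2 hadj
    have hcase : ∃ a : Vtx m n, a ∈ s(p.1, p.2) ∧ par m n a = par m n u := by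
      by_cases h : par m n p.1 = par m n u
      · exact ⟨p.1, Sym2.mem_iff.2 (Or.inl rfl), h⟩
      · refine ⟨p.2, Sym2.mem_iff.2 (Or.inr rfl), ?_⟩
        have hne2 : ∀ z w : ZMod 2, z ≠ w → z + 1 = w := by decide
        rw [hpar2]
        exact hne2 _ _ h
    obtain ⟨a, haw, hapar⟩ := hcase
    have hGDa := allGD a hapar
    rcases incident m n hn2 (hA he) haw with h | h | h
    · rw [h]
      exact Finset.mem_image.2 ⟨a, Finset.mem_univ a, rfl⟩
    · rw [h, show s(a, lf m n a) = s(lf m n a, rt m n (lf m n a)) by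
        rw [rt_lf]; exact Sym2.eq_swap]
      exact Finset.mem_image.2 ⟨lf m n a, Finset.mem_univ _, rfl⟩
    · exact absurd (h ▸ he) (keyV a hGDa)
  · intro e he
    obtain ⟨p, -, rfl⟩ := Finset.mem_image.1 he
    by_cases h : par m n p = par m n u
    · exact keyR p (allGD p h).2
    · have hp2 : par m n (rt m n p) = par m n u := by
        rw [par_adj m n hm2 hn2 (honeyAdj_rt m n p)]
        have hne2 : ∀ z w : ZMod 2, z ≠ w → z + 1 = w := by decide
        exact hne2 _ _ h
      have hmem := keyL (rt m n p) (allGD _ hp2)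
      rw [lf_rt] at hmem
      rw [show s(p, ((p.1 + 1, p.2) : Vtx m n)) = s(rt m n p, p) from Sym2.eq_swap]
      exact hmem
end FPL
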